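/- Let x₀, x₁ ∈ {0,1}^d differ in exactly m coordinates, and let b be uniformly random on {0,1}^d. Let B(b) = {x : x agrees with b in exactly d₀−1 or d₀ coordinates}. Then P(x₀ ∈ B(b) and x₁ ∈ B(b)) = 2^{−d}·C(m, ⌊m/2⌋)·[C(d−m, d₀−⌈m/2⌉) + C(d−m, d₀−⌈(m+1)/2⌉)]. -/

import Mathlib

open Finset

/-- Binomial coefficient with integer lower index, equal to `0` for negative
lower index (the convention `C(n,k) = 0` for `k < 0`). -/
def chooseInt (n : ℕ) (k : ℤ) : ℕ := if 0 ≤ k then n.choose k.toNat else 0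

/-- If `x₀, x₁ ∈ {0,1}^d` differ in exactly `m` coordinates and `b` is uniform
on `{0,1}^d`, then the probability that both `x₀` and `x₁` agree with `b` in
exactly `d₀−1` or `d₀` coordinates is
`2^{−d} C(m,⌊m/2⌋) [C(d−m, d₀−⌈m/2⌉) + C(d−m, d₀−⌈(m+1)/2⌉)]`. -/
lemma filter_ite_eq (d : ℕ) (x₀ : Fin d → Bool) {S U V : Finset (Fin d)}
    (hUS : U ⊆ S) (hVS : V ⊆ Sᶜ) :
    (S.filter fun i => x₀ i = if i ∈ U ∪ V then x₀ i else !(x₀ i)) = U ∧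
    (Sᶜ.filter fun i => x₀ i = if i ∈ U ∪ V then x₀ i else !(x₀ i)) = V := by
  have hUV : ∀ i, i ∈ U → i ∉ V := fun i hu hv => (mem_compl.mp (hVS hv)) (hUS hu)
  constructor <;> ext i <;> simp only [mem_filter, Finset.mem_union]
  · constructor
    · rintro ⟨hiS, he⟩
      by_cases h : i ∈ U ∨ i ∈ V
      · rcases h with h' | h'
        · exact h'
        · exact absurd hiS (mem_compl.mp (hVS h'))
      · rw [if_neg h] at he; simpa using he
    · intro hiU
      refine ⟨hUS hiU, ?_⟩
      rw [if_pos (Or.inl hiU)]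
  · constructor
    · rintro ⟨hiS, he⟩
      by_cases h : i ∈ U ∨ i ∈ V
      · rcases h with h' | h'
        · exact absurd (hUS h') (mem_compl.mp hiS)
        · exact h'
      · rw [if_neg h] at he; simpa using he
    · intro hiV
      refine ⟨hVS hiV, ?_⟩
      rw [if_pos (Or.inr hiV)]

lemma count_pair (d : ℕ) (x₀ : Fin d → Bool) (S : Finset (Fin d)) (a c : ℕ) :
    (univ.filter fun b : Fin d → Bool =>
      (S.filter fun i => x₀ i = b i).card = a ∧ (Sᶜ.filter fun i => x₀ i = b i).card = c).card
    = S.card.choose a * Sᶜ.card.choose c := by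
  rw [← Finset.card_powersetCard, ← Finset.card_powersetCard, ← Finset.card_product]
  apply Finset.card_nbij'
    (fun b => (S.filter fun i => x₀ i = b i, Sᶜ.filter fun i => x₀ i = b i))
    (fun UV => fun i => if i ∈ UV.1 ∪ UV.2 then x₀ i else !(x₀ i))
  · intro b hb
    simp only [mem_filter, mem_univ, true_and, Finset.mem_coe] at hb
    simp [Finset.mem_product, Finset.mem_powersetCard, hb.1, hb.2, Finset.filter_subset]
  · rintro ⟨U, V⟩ hUV
    simp only [Finset.mem_product, Finset.mem_powersetCard, Finset.mem_coe] at hUV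
    obtain ⟨⟨hUS, hUa⟩, ⟨hVS, hVc⟩⟩ := hUV
    obtain ⟨h1, h2⟩ := filter_ite_eq d x₀ hUS hVS
    simp only [mem_filter, mem_univ, true_and, Finset.mem_coe]
    exact ⟨by rw [h1, hUa], by rw [h2, hVc]⟩
  · intro b hb
    funext i
    by_cases h : x₀ i = b i
    · have : i ∈ (S.filter fun i => x₀ i = b i) ∪ (Sᶜ.filter fun i => x₀ i = b i) := by
        by_cases hiS : i ∈ S
        · exact Finset.mem_union_left _ (mem_filter.mpr ⟨hiS, h⟩)
        · exact Finset.mem_union_right _ (mem_filter.mpr ⟨mem_compl.mpr hiS, h⟩)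
      simp only [if_pos this]; exact h
    · have : i ∉ (S.filter fun i => x₀ i = b i) ∪ (Sᶜ.filter fun i => x₀ i = b i) := by
        simp only [Finset.mem_union, mem_filter, not_or]
        exact ⟨fun hh => h hh.2, fun hh => h hh.2⟩
      simp only [if_neg this]
      cases hx : x₀ i <;> cases hbi : b i <;> simp_all
  · rintro ⟨U, V⟩ hUV
    simp only [Finset.mem_product, Finset.mem_powersetCard, Finset.mem_coe] at hUV
    obtain ⟨⟨hUS, hUa⟩, ⟨hVS, hVc⟩⟩ := hUV
    obtain ⟨h1, h2⟩ := filter_ite_eq d x₀ hUS hVS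
    exact Prod.ext h1 h2

lemma count_pair' (d m : ℕ) (x₀ : Fin d → Bool) (S : Finset (Fin d)) (hS : S.card = m)
    (a n : ℕ) :
    (univ.filter fun b : Fin d → Bool =>
      (S.filter fun i => x₀ i = b i).card = a ∧
      a + (Sᶜ.filter fun i => x₀ i = b i).card = n).card
    = m.choose a * chooseInt (d - m) ((n : ℤ) - a) := by
  have hScc : Sᶜ.card = d - m := by rw [Finset.card_compl, hS, Fintype.card_fin]
  by_cases han : a ≤ n
  · have heq : ∀ b : Fin d → Bool,
        ((S.filter fun i => x₀ i = b i).card = a ∧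
          a + (Sᶜ.filter fun i => x₀ i = b i).card = n)
        ↔ ((S.filter fun i => x₀ i = b i).card = a ∧
          (Sᶜ.filter fun i => x₀ i = b i).card = n - a) := by
      intro b; omega
    rw [filter_congr fun b _ => heq b, count_pair d x₀ S a (n - a), hS, hScc,
      chooseInt, if_pos (by omega : (0:ℤ) ≤ (n : ℤ) - a)]
    have : ((n : ℤ) - a).toNat = n - a := by omega
    rw [this]
  · rw [Finset.filter_eq_empty_iff.mpr (fun b _ => by omega), Finset.card_empty,
      chooseInt, if_neg (by omega : ¬ (0:ℤ) ≤ (n : ℤ) - a), mul_zero]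

theorem pair_bucket_probability (d d₀ m : ℕ) (hd₀ : 0 < d₀) (hd : d₀ ≤ d)
    (x₀ x₁ : Fin d → Bool)
    (hm : (Finset.univ.filter fun i => x₀ i ≠ x₁ i).card = m) :
    (PMF.uniformOfFintype (Fin d → Bool)).toMeasure
        {b | ((Finset.univ.filter fun i => x₀ i = b i).card = d₀ - 1 ∨
              (Finset.univ.filter fun i => x₀ i = b i).card = d₀) ∧
             ((Finset.univ.filter fun i => x₁ i = b i).card = d₀ - 1 ∨
              (Finset.univ.filter fun i => x₁ i = b i).card = d₀)} =
      ((m.choose (m / 2) *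
          (chooseInt (d - m) ((d₀ : ℤ) - (m + 1) / 2) +
           chooseInt (d - m) ((d₀ : ℤ) - (m + 2) / 2)) : ℕ) : ENNReal) / 2 ^ d := by
  classical
  set S : Finset (Fin d) := univ.filter fun i => x₀ i ≠ x₁ i with hSdef
  set P : (Fin d → Bool) → Prop := fun b =>
      ((Finset.univ.filter fun i => x₀ i = b i).card = d₀ - 1 ∨
        (Finset.univ.filter fun i => x₀ i = b i).card = d₀) ∧
      ((Finset.univ.filter fun i => x₁ i = b i).card = d₀ - 1 ∨
        (Finset.univ.filter fun i => x₁ i = b i).card = d₀) with hPdef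
  have hset : {b | P b} = ↑(univ.filter P) := by ext b; simp
  have hmeas : MeasurableSet {b : Fin d → Bool | P b} := (Set.toFinite _).measurableSet
  rw [PMF.toMeasure_uniformOfFintype_apply _ hmeas]
  rw [show Fintype.card {b | P b} = (univ.filter P).card from by rw [← Set.toFinset_card]; simp]
  have hcardfun : (Fintype.card (Fin d → Bool) : ENNReal) = 2 ^ d := by
    simp [Fintype.card_fun]
  rw [hcardfun]
  congr 1
  norm_cast
  -- now a pure counting goal
  have hjm : ∀ b : Fin d → Bool, (S.filter fun i => x₀ i = b i).card ≤ m := by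
    intro b; rw [← hm]; exact Finset.card_le_card (filter_subset _ _)
  have h0 : ∀ b : Fin d → Bool, (univ.filter fun i => x₀ i = b i).card =
      (S.filter fun i => x₀ i = b i).card + (Sᶜ.filter fun i => x₀ i = b i).card := by
    intro b
    rw [← Finset.union_compl S, Finset.filter_union,
      Finset.card_union_of_disjoint (Finset.disjoint_filter_filter disjoint_compl_right)]
  have h1 : ∀ b : Fin d → Bool, (univ.filter fun i => x₁ i = b i).card =
      (m - (S.filter fun i => x₀ i = b i).card) + (Sᶜ.filter fun i => x₀ i = b i).card := by
    intro b
    rw [← Finset.union_compl S, Finset.filter_union,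
      Finset.card_union_of_disjoint (Finset.disjoint_filter_filter disjoint_compl_right)]
    have e1 : (S.filter fun i => x₁ i = b i) = S.filter fun i => ¬ (x₀ i = b i) := by
      apply filter_congr
      intro i hi
      rw [hSdef, mem_filter] at hi
      have hne : x₀ i ≠ x₁ i := hi.2
      revert hne
      cases hx0 : x₀ i <;> cases hx1 : x₁ i <;> cases hb : b i <;> decide
    have e2 : (Sᶜ.filter fun i => x₁ i = b i) = Sᶜ.filter fun i => x₀ i = b i := by
      apply filter_congr
      intro i hi
      rw [hSdef, Finset.mem_compl, mem_filter] at hi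
      have heq : x₀ i = x₁ i := by
        by_contra hne; exact hi ⟨mem_univ i, hne⟩
      rw [heq]
    rw [e1, e2]
    congr 1
    have := Finset.card_filter_add_card_filter_not (s := S)
      (p := fun i => x₀ i = b i)
    omega
  rcases Nat.even_or_odd m with ⟨t, ht⟩ | ⟨t, ht⟩
  · -- even case: m = t + t
    have hPiff : ∀ b : Fin d → Bool, P b ↔
        (((S.filter fun i => x₀ i = b i).card = t ∧
            t + (Sᶜ.filter fun i => x₀ i = b i).card = d₀ - 1) ∨
         ((S.filter fun i => x₀ i = b i).card = t ∧
            t + (Sᶜ.filter fun i => x₀ i = b i).card = d₀)) := by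
      intro b
      simp only [hPdef]
      rw [h0 b, h1 b]
      have := hjm b
      omega
    rw [filter_congr fun b _ => hPiff b, filter_or,
      card_union_of_disjoint (by
        rw [Finset.disjoint_left]
        intro b hb1 hb2
        simp only [mem_filter] at hb1 hb2
        omega),
      count_pair' d m x₀ S hm t (d₀ - 1), count_pair' d m x₀ S hm t d₀]
    rw [Int.subNatNat_eq_coe, Int.subNatNat_eq_coe]
    have e1 : m / 2 = t := by omega
    have e2 : (m + 1) / 2 = t := by omega
    have e3 : (m + 2) / 2 = t + 1 := by omega
    have e4 : (((d₀ - 1 : ℕ) : ℤ)) - (t : ℤ) = (d₀ : ℤ) - ((t + 1 : ℕ) : ℤ) := by omega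
    rw [e1, e2, e3, e4]
    ring
  · -- odd case: m = 2 * t + 1
    have hPiff : ∀ b : Fin d → Bool, P b ↔
        (((S.filter fun i => x₀ i = b i).card = t ∧
            t + (Sᶜ.filter fun i => x₀ i = b i).card = d₀ - 1) ∨
         ((S.filter fun i => x₀ i = b i).card = t + 1 ∧
            (t + 1) + (Sᶜ.filter fun i => x₀ i = b i).card = d₀)) := by
      intro b
      simp only [hPdef]
      rw [h0 b, h1 b]
      have := hjm b
      omega
    rw [filter_congr fun b _ => hPiff b, filter_or,
      card_union_of_disjoint (by
        rw [Finset.disjoint_left]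
        intro b hb1 hb2
        simp only [mem_filter] at hb1 hb2
        omega),
      count_pair' d m x₀ S hm t (d₀ - 1), count_pair' d m x₀ S hm (t + 1) d₀]
    rw [Int.subNatNat_eq_coe, Int.subNatNat_eq_coe]
    have e1 : m / 2 = t := by omega
    have e2 : (m + 1) / 2 = t + 1 := by omega
    have e3 : (m + 2) / 2 = t + 1 := by omega
    have e4 : (((d₀ - 1 : ℕ) : ℤ)) - (t : ℤ) = (d₀ : ℤ) - ((t + 1 : ℕ) : ℤ) := by omega
    have e5 : m.choose (t + 1) = m.choose t := by
      rw [show t + 1 = m - t by omega]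
      exact Nat.choose_symm (by omega)
    rw [e1, e2, e3, e4, e5]
    ring
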